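/- For a power bounded operator T and a Banach limit L, the L-asymptotic limit A_{T,L} is invertible if and only if there exists c > 0 with ‖T^n x‖ ≥ c‖x‖ for all x ∈ H and n ∈ ℕ. -/

import Mathlib

open ContinuousLinearMap Filter Topology BoundedContinuousFunction

/-- The shift `n ↦ n + 1` as a continuous map on `ℕ`. -/
def natShift : C(ℕ, ℕ) := ⟨fun n => n + 1, continuous_of_discreteTopology⟩

/-- A Banach limit: a norm-one positive shift-invariant continuous linear functional on
the space of bounded (complex) sequences which extends the ordinary limit functional. -/
structure IsBanachLimit (L : (ℕ →ᵇ ℂ) →L[ℂ] ℂ) : Prop where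
  norm_one : ‖L‖ = 1
  lim_eq : ∀ (f : ℕ →ᵇ ℂ) (c : ℂ), Tendsto f atTop (𝓝 c) → L f = c
  pos : ∀ f : ℕ →ᵇ ℂ, (∀ n, 0 ≤ (f n).re ∧ (f n).im = 0) → 0 ≤ (L f).re ∧ (L f).im = 0
  shift_inv : ∀ f : ℕ →ᵇ ℂ, L (f.compContinuous natShift) = L f

lemma BL_shift {L : (ℕ →ᵇ ℂ) →L[ℂ] ℂ} (hL : IsBanachLimit L) (m : ℕ) :
    ∀ (f g : ℕ →ᵇ ℂ), (∀ n, g n = f (n + m)) → L g = L f := by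
  induction m with
  | zero => intro f g h; congr 1; ext n; simp [h n]
  | succ m ih =>
    intro f g h
    have h1 : L g = L (f.compContinuous natShift) := by
      refine ih _ _ fun n => ?_
      rw [h n]
      rfl
    rw [h1, hL.shift_inv]

lemma BL_lower {L : (ℕ →ᵇ ℂ) →L[ℂ] ℂ} (hL : IsBanachLimit L) (f : ℕ →ᵇ ℂ) (a : ℝ)
    (h : ∀ n, a ≤ (f n).re ∧ (f n).im = 0) : a ≤ (L f).re ∧ (L f).im = 0 := by
  set g : ℕ →ᵇ ℂ := f - BoundedContinuousFunction.const ℕ (a : ℂ) with hg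
  have hLc : L (BoundedContinuousFunction.const ℕ (a : ℂ)) = (a : ℂ) :=
    hL.lim_eq _ _ tendsto_const_nhds
  have hLg : L g = L f - a := by rw [hg, map_sub, hLc]
  have := hL.pos g (fun n => by
    simp only [hg, BoundedContinuousFunction.sub_apply, BoundedContinuousFunction.const_apply,
      Complex.sub_re, Complex.sub_im, Complex.ofReal_re, Complex.ofReal_im]
    constructor
    · linarith [(h n).1]
    · simp [(h n).2])
  rw [hLg] at this
  simp only [Complex.sub_re, Complex.sub_im, Complex.ofReal_re, Complex.ofReal_im] at this
  constructor <;> [linarith [this.1]; linarith [this.2]]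

/-- `A` is the `L`-asymptotic limit of `T`: a positive operator whose sesquilinear form is
the `L`-limit of the forms of the self-adjoint iterates `T*^n T^n`. -/
def IsLAsymptoticLimit {H : Type*} [NormedAddCommGroup H] [InnerProductSpace ℂ H]
    [CompleteSpace H] (L : (ℕ →ᵇ ℂ) →L[ℂ] ℂ) (T A : H →L[ℂ] H) : Prop :=
  A.IsPositive ∧ ∀ (x y : H) (f : ℕ →ᵇ ℂ),
    (∀ n : ℕ, f n = (inner ℂ ((adjoint (T ^ n) ∘L T ^ n) x) y : ℂ)) →
      (inner ℂ (A x) y : ℂ) = L f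

/-- For a power bounded `T` and a Banach limit `L`, the `L`-asymptotic limit `A_{T,L}`
is invertible if and only if there is `c > 0` with `‖T^n x‖ ≥ c ‖x‖` for all `x, n`. -/
theorem stmt9 {H : Type*} [NormedAddCommGroup H] [InnerProductSpace ℂ H] [CompleteSpace H]
    (T : H →L[ℂ] H) (hT : ∃ C : ℝ, ∀ n : ℕ, ‖T ^ n‖ ≤ C)
    (L : (ℕ →ᵇ ℂ) →L[ℂ] ℂ) (hL : IsBanachLimit L)
    (A : H →L[ℂ] H) (hA : IsLAsymptoticLimit L T A) :
    IsUnit A ↔ ∃ c : ℝ, 0 < c ∧ ∀ (x : H) (n : ℕ), c * ‖x‖ ≤ ‖(T ^ n) x‖ := by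
  obtain ⟨hApos, hAlim⟩ := hA
  obtain ⟨C, hC⟩ := hT
  have hTn : ∀ (n : ℕ) (x : H), ‖(T ^ n) x‖ ≤ C * ‖x‖ := fun n x =>
    ((T ^ n).le_opNorm x).trans (mul_le_mul_of_nonneg_right (hC n) (norm_nonneg x))
  set F : H → H → (ℕ →ᵇ ℂ) := fun x y =>
    BoundedContinuousFunction.ofNormedAddCommGroup
      (fun n => (inner ℂ ((T ^ n) x) ((T ^ n) y) : ℂ))
      continuous_of_discreteTopology ((C * ‖x‖) * (C * ‖y‖)) (fun n =>
        (norm_inner_le_norm _ _).trans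
          (mul_le_mul (hTn n x) (hTn n y) (norm_nonneg _)
            (mul_nonneg (le_trans (norm_nonneg _) (hC 0)) (norm_nonneg _)))) with hF
  have hFapp : ∀ (x y : H) (n : ℕ), F x y n = (inner ℂ ((T ^ n) x) ((T ^ n) y) : ℂ) :=
    fun x y n => rfl
  have hAin : ∀ x y : H, (inner ℂ (A x) y : ℂ) = L (F x y) := fun x y =>
    hAlim x y (F x y) (fun n => by
      rw [hFapp, ContinuousLinearMap.comp_apply, ContinuousLinearMap.adjoint_inner_left])
  have hinv : ∀ (x : H) (m : ℕ),
      (inner ℂ (A ((T ^ m) x)) ((T ^ m) x) : ℂ) = (inner ℂ (A x) x : ℂ) := by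
    intro x m
    rw [hAin, hAin]
    refine BL_shift hL m (F x x) (F ((T ^ m) x) ((T ^ m) x)) (fun n => ?_)
    rw [hFapp, hFapp]
    have hpw : ∀ z : H, (T ^ n) ((T ^ m) z) = (T ^ (n + m)) z := fun z => by
      rw [pow_add, ContinuousLinearMap.mul_apply]
    rw [hpw]
  constructor
  · -- forward
    rintro ⟨u, hu⟩
    set B : H →L[ℂ] H := ↑u⁻¹ with hB
    have hBA : ∀ x : H, B (A x) = x := fun x => by
      have := congrArg (fun f : H →L[ℂ] H => f x) u.inv_mul
      simpa [hB, hu, ContinuousLinearMap.mul_apply] using this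
    have hxB : ∀ x : H, ‖x‖ ≤ (‖B‖ + 1) * ‖A x‖ := fun x => by
      calc ‖x‖ = ‖B (A x)‖ := by rw [hBA]
        _ ≤ ‖B‖ * ‖A x‖ := B.le_opNorm _
        _ ≤ (‖B‖ + 1) * ‖A x‖ := by
            apply mul_le_mul_of_nonneg_right (by linarith) (norm_nonneg _)
    have hadj : ContinuousLinearMap.adjoint A = A :=
      ContinuousLinearMap.isSelfAdjoint_iff'.mp hApos.isSelfAdjoint
    have hsym : ∀ u v : H, (inner ℂ (A u) v : ℂ) = starRingEnd ℂ (inner ℂ (A v) u : ℂ) := by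
      intro a b
      conv_lhs => rw [← hadj]
      rw [ContinuousLinearMap.adjoint_inner_left, ← inner_conj_symm]
    have hre0 : ∀ x : H, 0 ≤ (inner ℂ (A x) x : ℂ).re := fun x =>
      (Complex.nonneg_iff.mp (hApos.inner_nonneg_left x)).1
    have hCS : ∀ x y : H, ((inner ℂ (A x) y : ℂ).re) ^ 2 ≤
        (inner ℂ (A x) x : ℂ).re * (inner ℂ (A y) y : ℂ).re := by
      intro x y
      have hq : ∀ t : ℝ, 0 ≤ (inner ℂ (A y) y : ℂ).re * (t * t) +
          (2 * (inner ℂ (A x) y : ℂ).re) * t + (inner ℂ (A x) x : ℂ).re := by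
        intro t
        have h0 := hApos.inner_nonneg_left (x + (t : ℂ) • y)
        have hexp : (inner ℂ (A (x + (t : ℂ) • y)) (x + (t : ℂ) • y) : ℂ) =
            inner ℂ (A x) x + (t : ℂ) * (inner ℂ (A x) y + inner ℂ (A y) x) +
              ((t : ℂ) * (t : ℂ)) * inner ℂ (A y) y := by
          simp only [map_add, map_smul, inner_add_left, inner_add_right,
            inner_smul_left, inner_smul_right, Complex.conj_ofReal]
          ring
        have h0' : 0 ≤ (inner ℂ (A (x + (t : ℂ) • y)) (x + (t : ℂ) • y) : ℂ).re := by
          exact (Complex.nonneg_iff.mp h0).1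
        rw [hexp] at h0'
        have hyx : (inner ℂ (A y) x : ℂ).re = (inner ℂ (A x) y : ℂ).re := by
          rw [hsym x y, Complex.conj_re]
        simp only [Complex.add_re, Complex.mul_re, Complex.ofReal_re, Complex.ofReal_im,
          Complex.add_im, Complex.mul_im, zero_mul, mul_zero, sub_zero, add_zero,
          zero_add] at h0'
        rw [hyx] at h0'
        linarith
      have hd := discrim_le_zero hq
      rw [discrim] at hd
      nlinarith [hd]
    have hnormin : ∀ x y : H, (inner ℂ (A x) y : ℂ).re ≤ ‖A‖ * (‖x‖ * ‖y‖) := by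
      intro x y
      calc (inner ℂ (A x) y : ℂ).re ≤ ‖(inner ℂ (A x) y : ℂ)‖ := Complex.re_le_norm _
        _ = ‖(inner ℂ (A x) y : ℂ)‖ := rfl
        _ ≤ ‖A x‖ * ‖y‖ := norm_inner_le_norm _ _
        _ ≤ (‖A‖ * ‖x‖) * ‖y‖ :=
            mul_le_mul_of_nonneg_right (A.le_opNorm x) (norm_nonneg _)
        _ = ‖A‖ * (‖x‖ * ‖y‖) := by ring
    have hlow : ∀ x : H, ‖x‖ ^ 2 ≤
        ((‖B‖ + 1) ^ 2 * (‖A‖ + 1)) * (inner ℂ (A x) x : ℂ).re := by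
      intro x
      have h1 := hCS x (A x)
      have hAA : (inner ℂ (A x) (A x) : ℂ).re = ‖A x‖ ^ 2 := by
        simpa using inner_self_eq_norm_sq (𝕜 := ℂ) (A x)
      have h2 : (inner ℂ (A (A x)) (A x) : ℂ).re ≤ (‖A‖ + 1) * ‖A x‖ ^ 2 := by
        have := hnormin (A x) (A x)
        nlinarith [norm_nonneg (A x), norm_nonneg A]
      have hx1 := hxB x
      by_cases hz : ‖A x‖ = 0
      · have hx0 : ‖x‖ = 0 := le_antisymm (by simpa [hz] using hx1) (norm_nonneg _)
        rw [hx0]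
        have : (0:ℝ) ≤ ((‖B‖ + 1) ^ 2 * (‖A‖ + 1)) * (inner ℂ (A x) x : ℂ).re :=
          mul_nonneg (by positivity) (hre0 x)
        nlinarith [this]
      · have hz' : 0 < ‖A x‖ := lt_of_le_of_ne (norm_nonneg _) (Ne.symm hz)
        rw [hAA] at h1
        have hr := hre0 x
        have hr2 := hre0 (A x)
        have hAx2 : ‖A x‖ ^ 2 ≤ (‖A‖ + 1) * (inner ℂ (A x) x : ℂ).re := by
          nlinarith [h1, mul_le_mul_of_nonneg_left h2 hr, mul_pos hz' hz']
        nlinarith [mul_self_le_mul_self (norm_nonneg x) hx1,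
          mul_le_mul_of_nonneg_left hAx2
            (by positivity : (0:ℝ) ≤ (‖B‖ + 1) ^ 2)]
    set M : ℝ := (‖B‖ + 1) ^ 2 * (‖A‖ + 1) ^ 2 with hM
    have hMpos : 0 < M := by positivity
    refine ⟨(Real.sqrt M)⁻¹, inv_pos.mpr (Real.sqrt_pos.mpr hMpos), fun x m => ?_⟩
    have hkey : ‖x‖ ^ 2 ≤ M * ‖(T ^ m) x‖ ^ 2 := by
      have h1 := hlow x
      have h2 : (inner ℂ (A x) x : ℂ).re = (inner ℂ (A ((T ^ m) x)) ((T ^ m) x) : ℂ).re := by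
        rw [hinv]
      have h4 : (inner ℂ (A ((T ^ m) x)) ((T ^ m) x) : ℂ).re ≤
          (‖A‖ + 1) * ‖(T ^ m) x‖ ^ 2 := by
        nlinarith [hnormin ((T ^ m) x) ((T ^ m) x), norm_nonneg ((T ^ m) x),
          norm_nonneg A]
      have h5 := mul_le_mul_of_nonneg_left h4
        (by positivity : (0:ℝ) ≤ (‖B‖ + 1) ^ 2 * (‖A‖ + 1))
      rw [h2] at h1
      nlinarith [h1, h5]
    have hs : ‖x‖ ≤ Real.sqrt M * ‖(T ^ m) x‖ := by
      have := Real.sqrt_le_sqrt hkey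
      rwa [Real.sqrt_sq (norm_nonneg _), Real.sqrt_mul (le_of_lt hMpos),
        Real.sqrt_sq (norm_nonneg _)] at this
    have hsne : Real.sqrt M ≠ 0 := ne_of_gt (Real.sqrt_pos.mpr hMpos)
    calc (Real.sqrt M)⁻¹ * ‖x‖ ≤ (Real.sqrt M)⁻¹ * (Real.sqrt M * ‖(T ^ m) x‖) := by
          apply mul_le_mul_of_nonneg_left hs (by positivity)
      _ = ‖(T ^ m) x‖ := by field_simp
  · -- backward
    rintro ⟨c, hc, hcx⟩
    have hc2 : (0 : NNReal) < ⟨c ^ 2, sq_nonneg c⟩ := by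
      apply NNReal.coe_pos.mp
      exact pow_pos hc 2
    apply ContinuousLinearMap.isUnit_of_forall_le_norm_inner_map A hc2
    intro x
    have h1 : ∀ n : ℕ, c ^ 2 * ‖x‖ ^ 2 ≤ (F x x n).re ∧ (F x x n).im = 0 := fun n => by
      rw [hFapp]
      refine ⟨?_, by exact inner_self_im (𝕜 := ℂ) ((T ^ n) x)⟩
      have h := inner_self_eq_norm_sq (𝕜 := ℂ) ((T ^ n) x)
      simp only [RCLike.re_to_complex] at h
      rw [h]
      nlinarith [hcx x n, norm_nonneg x, mul_nonneg (le_of_lt hc) (norm_nonneg x)]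
    have h2 := BL_lower hL (F x x) (c ^ 2 * ‖x‖ ^ 2) h1
    have h3 : (inner ℂ (A x) x : ℂ) = L (F x x) := hAin x x
    calc ‖x‖ ^ 2 * (⟨c ^ 2, sq_nonneg c⟩ : NNReal) = c ^ 2 * ‖x‖ ^ 2 := by
          simp [NNReal.coe_mk]; ring
      _ ≤ (L (F x x)).re := h2.1
      _ ≤ ‖L (F x x)‖ := Complex.re_le_norm _
      _ = ‖(inner ℂ (A x) x : ℂ)‖ := by rw [h3]
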